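/- Perfect masking in the non-DDH case: let q be prime, a, b, c ∈ ZMod q with c ≠ a·b. If (a₁, b₁) is chosen uniformly at random in (ZMod q)², then conditioned on the value of a₁ + a·b₁, the value b·a₁ + c·b₁ is uniformly distributed on ZMod q. -/

import Mathlib

/-- Perfect masking in the non-DDH case: conditioned on `a₁ + a·b₁ = h'`, the
map `(a₁,b₁) ↦ b·a₁ + c·b₁` is a bijection onto `ZMod q`, so for uniformly
random `(a₁,b₁)` the mask `b·a₁ + c·b₁` is uniform given `a₁ + a·b₁`. -/
theorem stmt_7 {q : ℕ} (hq : q.Prime) (a b c : ZMod q) (hc : c ≠ a * b) :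
    ∀ h' : ZMod q,
      Set.BijOn (fun p : ZMod q × ZMod q => b * p.1 + c * p.2)
        {p : ZMod q × ZMod q | p.1 + a * p.2 = h'} Set.univ := by
  haveI : Fact q.Prime := ⟨hq⟩
  intro h'
  have hd : c - a * b ≠ 0 := sub_ne_zero.mpr hc
  refine ⟨fun _ _ => trivial, ?_, ?_⟩
  · rintro ⟨x1, y1⟩ h1 ⟨x2, y2⟩ h2 he
    simp only [Set.mem_setOf_eq] at h1 h2
    simp only at he
    have hx1 : x1 = h' - a * y1 := by linear_combination h1
    have hx2 : x2 = h' - a * y2 := by linear_combination h2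
    subst hx1 hx2
    have hy : y1 = y2 := by
      have : (c - a * b) * y1 = (c - a * b) * y2 := by ring_nf; linear_combination he
      exact mul_left_cancel₀ hd this
    simp [hy]
  · rintro y -
    refine ⟨(h' - a * ((y - b * h') / (c - a * b)), (y - b * h') / (c - a * b)), ?_, ?_⟩
    · simp
    · simp only
      rw [show ∀ t, b * (h' - a * t) + c * t = b * h' + (c - a * b) * t from fun t => by ring,
        mul_div_cancel₀ _ hd]
      ring
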